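/- There is a group isomorphism from the group with presentation ⟨σ₁, σ₂ ∣ σ₁σ₂σ₁σ₂ = σ₂σ₁σ₂σ₁, (σ₁σ₂)² = 1⟩ (the quotient of the braid group of type B₂ by its center) to the free product ℤ * ℤ/2ℤ which sends σ₁ to x and σ₂ to x⁻¹y, where x denotes the generator of the factor ℤ and y the generator of the factor ℤ/2ℤ. -/

import Mathlib

/-- Relators of the quotient of the braid group of type `B₂` by its center:
`(σ₁σ₂)²(σ₂σ₁)⁻²` and `(σ₁σ₂)²`. -/
def B2QuotRels : Set (FreeGroup (Fin 2)) :=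
  { (FreeGroup.of 0 * FreeGroup.of 1) ^ 2 * ((FreeGroup.of 1 * FreeGroup.of 0) ^ 2)⁻¹,
    (FreeGroup.of 0 * FreeGroup.of 1) ^ 2 }

namespace B2Aux

open Monoid

abbrev G := Coprod (Multiplicative ℤ) (Multiplicative (ZMod 2))
abbrev P := PresentedGroup B2QuotRels

def x : G := Coprod.inl (Multiplicative.ofAdd (1 : ℤ))
def y : G := Coprod.inr (Multiplicative.ofAdd (1 : ZMod 2))

def f : Fin 2 → G := ![x, x⁻¹ * y]

lemma y_sq : y ^ 2 = 1 := by
  have : (Multiplicative.ofAdd (1 : ZMod 2)) ^ 2 = 1 := by decide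
  rw [y, ← map_pow, this, map_one]

lemma rels_hold : ∀ r ∈ B2QuotRels, FreeGroup.lift f r = 1 := by
  intro r hr
  rcases hr with h | h <;> subst h <;> simp [f, map_mul, map_pow, mul_pow]
  · rw [show (x⁻¹ * y * x) ^ 2 = x⁻¹ * y ^ 2 * x from by rw [sq, sq]; group, y_sq]
    group
  · exact y_sq

def fwd : P →* G := PresentedGroup.toGroup rels_hold

def g : P := PresentedGroup.of 0 * PresentedGroup.of 1

lemma g_sq : g ^ 2 = 1 := by
  have h : ((FreeGroup.of 0 * FreeGroup.of 1 : FreeGroup (Fin 2)) ^ 2) ∈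
      Subgroup.normalClosure B2QuotRels :=
    Subgroup.subset_normalClosure (Or.inr rfl)
  have : PresentedGroup.mk B2QuotRels ((FreeGroup.of 0 * FreeGroup.of 1) ^ 2) = 1 :=
    (QuotientGroup.eq_one_iff _).mpr h
  simpa [g, map_pow, map_mul, PresentedGroup.of] using this

def toZ : Multiplicative ℤ →* P := zpowersHom P (PresentedGroup.of 0)

def toZ2 : Multiplicative (ZMod 2) →* P :=
  AddMonoidHom.toMultiplicativeLeft
    (ZMod.lift 2 ⟨(zmultiplesHom (Additive P)) (Additive.ofMul g), by
      show (2 : ℤ) • Additive.ofMul g = 0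
      rw [← ofMul_zpow]
      show Additive.ofMul (g ^ (2 : ℤ)) = Additive.ofMul 1
      rw [show (2 : ℤ) = ((2 : ℕ) : ℤ) from rfl, zpow_natCast, g_sq]⟩)

lemma toZ2_one : toZ2 (Multiplicative.ofAdd (1 : ZMod 2)) = g := by
  rw [toZ2, AddMonoidHom.coe_toMultiplicativeLeft, Function.comp_apply, Function.comp_apply]
  rw [show (Multiplicative.ofAdd (1 : ZMod 2)).toAdd = ((1 : ℤ) : ZMod 2) from by decide]
  rw [ZMod.lift_coe]
  show Additive.toMul ((1 : ℤ) • Additive.ofMul g) = g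
  rw [← ofMul_zpow, zpow_one]
  rfl

def bwd : G →* P := Coprod.lift toZ toZ2

lemma bwd_x : bwd x = PresentedGroup.of 0 := by
  rw [bwd, x, Coprod.lift_apply_inl, toZ, zpowersHom_apply, toAdd_ofAdd, zpow_one]
lemma bwd_y : bwd y = g := by rw [bwd, y, Coprod.lift_apply_inr, toZ2_one]

lemma fwd_of0 : fwd (PresentedGroup.of 0) = x := PresentedGroup.toGroup.of rels_hold
lemma fwd_of1 : fwd (PresentedGroup.of 1) = x⁻¹ * y := PresentedGroup.toGroup.of rels_hold

lemma bwd_fwd : bwd.comp fwd = MonoidHom.id P := by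
  apply PresentedGroup.ext
  intro i
  fin_cases i
  · show bwd (fwd (PresentedGroup.of 0)) = PresentedGroup.of 0
    rw [fwd_of0, bwd_x]
  · show bwd (fwd (PresentedGroup.of 1)) = PresentedGroup.of 1
    rw [fwd_of1, map_mul, map_inv, bwd_x, bwd_y, g]
    group

lemma fwd_bwd : fwd.comp bwd = MonoidHom.id G := by
  apply Coprod.hom_ext
  · apply MonoidHom.ext_mint
    simp [bwd, toZ, fwd_of0, x]
  · ext a
    induction a using Multiplicative.rec with
    | _ z =>
      fin_cases z
      · exact congrArg Additive.toMul ((map_zero _).trans (map_zero _).symm)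
      · show fwd (bwd y) = y
        rw [bwd_y, g, map_mul, fwd_of0, fwd_of1]
        group

def e : P ≃* G :=
  { toFun := fwd, invFun := bwd,
    left_inv := fun p => DFunLike.congr_fun bwd_fwd p,
    right_inv := fun q => DFunLike.congr_fun fwd_bwd q,
    map_mul' := map_mul fwd }

end B2Aux

open Monoid in
theorem stmt_4 :
    ∃ e : PresentedGroup B2QuotRels ≃* Coprod (Multiplicative ℤ) (Multiplicative (ZMod 2)),
      e (PresentedGroup.of 0) = Coprod.inl (Multiplicative.ofAdd (1 : ℤ)) ∧
      e (PresentedGroup.of 1) =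
        (Coprod.inl (Multiplicative.ofAdd (1 : ℤ)))⁻¹ *
          Coprod.inr (Multiplicative.ofAdd (1 : ZMod 2)) := by
  exact ⟨B2Aux.e, B2Aux.fwd_of0, B2Aux.fwd_of1⟩
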